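/- Let Q be a tame quiver of type Ã_{r,s} with minimal imaginary root δ = (1,…,1). Let E⁽⁰⁾₁[s] be the indecomposable regular module of dimension vector δ in the non-homogeneous tube T₀ with quasi-socle E⁽⁰⁾₁, and E(λ) a degree-1 regular simple in a homogeneous tube. Then for every dimension vector e, |Gr_e(E⁽⁰⁾₁[s])| = |Gr_e(E(λ))| + |Gr_{e − dim S_{r+2}}(E⁽⁰⁾₂[s−2])|, where Gr_e(M) is the set of submodules of M of dimension vector e. -/

import Mathlib

open Matrix

/-- A finite-dimensional representation of a quiver with vertex set `V` and
arrow set `A` (source `src`, target `tgt`) over a field `k`: a dimension at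
each vertex and a matrix for each arrow. -/
structure FinRep (k : Type) [Field k] (V A : Type) (src tgt : A → V) where
  dim : V → ℕ
  mat : ∀ a : A, Matrix (Fin (dim (tgt a))) (Fin (dim (src a))) k

/-- A subrepresentation: a subspace at each vertex, stable under all arrows. -/
structure SubRep {k : Type} [Field k] {V A : Type} {src tgt : A → V}
    (M : FinRep k V A src tgt) where
  sub : ∀ v : V, Submodule k (Fin (M.dim v) → k)
  compat : ∀ a : A, ∀ x ∈ sub (src a), (M.mat a).mulVec x ∈ sub (tgt a)

/-- |Gr_e(M)|: the number of subrepresentations of `M` with dimension vector `e`. -/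
noncomputable def grCard {k : Type} [Field k] {V A : Type} {src tgt : A → V}
    (M : FinRep k V A src tgt) (e : V → ℤ) : ℕ :=
  Nat.card {U : SubRep M // ∀ v : V, (Module.finrank k (U.sub v) : ℤ) = e v}

/-- Sources of the arrows of the quiver of type Ã_{r,s} (vertices 0,…,r+s−1,
corresponding to the paper's 1,…,r+s): arrows a → a+1 for a < r along the top,
the arrow 0 → r+s−1, and arrows a → a−1 for r < a < r+s along the bottom. -/
def srcA (r s a : ℕ) : ℕ :=
  if a < r then a else if a = r then 0 else if a < r + s then a else 0

/-- Targets of the arrows of the quiver of type Ã_{r,s}. -/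
def tgtA (r s a : ℕ) : ℕ :=
  if a < r then a + 1 else if a = r then r + s - 1 else if a < r + s then a - 1 else 0

/-- The representation of Ã_{r,s} with prescribed dimensions `d` and each arrow
acting by the scalar `c a` (as a constant matrix). -/
def scalarRep (k : Type) [Field k] (r s : ℕ) (d : ℕ → ℕ) (c : ℕ → k) :
    FinRep k ℕ ℕ (srcA r s) (tgtA r s) where
  dim := d
  mat := fun a => Matrix.of fun _ _ => c a

section Aux

variable {k : Type} [Field k]

lemma constMat_mulVec {p m : ℕ} (c : k) (x : Fin m → k) :
    (Matrix.of (fun _ _ => c) : Matrix (Fin p) (Fin m) k).mulVec x = fun _ => c * ∑ j, x j := by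
  funext i
  simp [Matrix.mulVec, dotProduct, Finset.mul_sum]

lemma fin0_eq_zero {d : ℕ} (hd : d = 0) (x : Fin d → k) : x = 0 :=
  funext fun i => absurd i.isLt (by omega)

lemma submodule_eq_of_finrank_eq {d : ℕ} (hd : d ≤ 1)
    (p q : Submodule k (Fin d → k)) (h : Module.finrank k p = Module.finrank k q) : p = q := by
  interval_cases d
  · have : Subsingleton (Fin 0 → k) := ⟨fun a b => by rw [fin0_eq_zero rfl a, fin0_eq_zero rfl b]⟩
    exact Subsingleton.elim p q
  · have hA : Module.finrank k (Fin 1 → k) = 1 := by simp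
    have hp : Module.finrank k p ≤ 1 := le_trans (Submodule.finrank_le p) (le_of_eq hA)
    rcases Nat.le_one_iff_eq_zero_or_eq_one.mp hp with h0 | h1
    · rw [Submodule.finrank_eq_zero.mp h0,
        Submodule.finrank_eq_zero.mp (h ▸ h0 : Module.finrank k q = 0)]
    · rw [Submodule.eq_top_of_finrank_eq (S := p) (by rw [h1, hA]),
        Submodule.eq_top_of_finrank_eq (S := q) (by rw [← h, h1, hA])]

lemma SubRep.ext' {V A : Type} {src tgt : A → V} {M : FinRep k V A src tgt}
    {U U' : SubRep M} (h : U.sub = U'.sub) : U = U' := by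
  cases U; cases U'; cases h; rfl

lemma subrep_subsingleton {src tgt : ℕ → ℕ} (M : FinRep k ℕ ℕ src tgt)
    (hd : ∀ v, M.dim v ≤ 1) (e : ℕ → ℤ) :
    Subsingleton {U : SubRep M // ∀ v, (Module.finrank k (U.sub v) : ℤ) = e v} := by
  constructor
  rintro ⟨U, hU⟩ ⟨U', hU'⟩
  apply Subtype.ext
  apply SubRep.ext'
  funext v
  exact submodule_eq_of_finrank_eq (hd v) _ _
    (by exact_mod_cast (hU v).trans (hU' v).symm)

lemma scalarRep_dim (r s : ℕ) (d : ℕ → ℕ) (c : ℕ → k) (v : ℕ) :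
    (scalarRep k r s d c).dim v = d v := rfl

lemma nonempty_iff (r s : ℕ) (d : ℕ → ℕ) (c : ℕ → k) (hd : ∀ v, d v ≤ 1) (e : ℕ → ℤ) :
    Nonempty {U : SubRep (scalarRep k r s d c) //
        ∀ v, (Module.finrank k (U.sub v) : ℤ) = e v} ↔
      ((∀ v, e v = 0 ∨ (e v = 1 ∧ d v = 1)) ∧
       ∀ a, c a ≠ 0 → d (srcA r s a) = 1 → d (tgtA r s a) = 1 →
         e (srcA r s a) = 1 → e (tgtA r s a) = 1) := by
  constructor
  · rintro ⟨U, hU⟩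
    have hrange : ∀ v, e v = 0 ∨ (e v = 1 ∧ d v = 1) := by
      intro v
      have h1 : Module.finrank k (U.sub v) ≤ d v := by
        have h0 := Submodule.finrank_le (U.sub v)
        exact h0.trans_eq (Module.finrank_fin_fun k)
      have h2 := hU v
      have h3 := hd v
      omega
    refine ⟨hrange, fun a hc hsrc htgt hes => ?_⟩
    have hftop : Module.finrank k (U.sub (srcA r s a)) = 1 := by
      have h2 := hU (srcA r s a)
      rw [hes] at h2
      exact_mod_cast h2
    have hsubtop : U.sub (srcA r s a) = ⊤ := by
      apply Submodule.eq_top_of_finrank_eq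
      rw [hftop, scalarRep_dim, Module.finrank_fin_fun, hsrc]
    have hx : (fun _ => (1 : k)) ∈ U.sub (srcA r s a) := by rw [hsubtop]; trivial
    have hcomp := U.compat a _ hx
    have hmv : ((scalarRep k r s d c).mat a).mulVec (fun _ => (1 : k))
        = fun _ => c a * ∑ _j : Fin (d (srcA r s a)), (1 : k) := constMat_mulVec _ _
    rw [hmv] at hcomp
    have hne : U.sub (tgtA r s a) ≠ ⊥ := by
      intro hbot
      rw [hbot, Submodule.mem_bot] at hcomp
      have := congrFun hcomp ⟨0, by rw [scalarRep_dim, htgt]; omega⟩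
      simp only [Finset.sum_const, Finset.card_univ, Fintype.card_fin, hsrc, one_smul,
        mul_one, Pi.zero_apply] at this
      exact hc this
    have hfr : Module.finrank k (U.sub (tgtA r s a)) ≠ 0 := fun h0 =>
      hne (Submodule.finrank_eq_zero.mp h0)
    have h2 := hU (tgtA r s a)
    rcases hrange (tgtA r s a) with h | h
    · omega
    · exact h.1
  · rintro ⟨hrange, hclosed⟩
    classical
    refine ⟨⟨⟨fun v => if e v = 1 then ⊤ else ⊥, ?_⟩, ?_⟩⟩
    · intro a x hx
      by_cases htgt : e (tgtA r s a) = 1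
      · simp only [if_pos htgt]; exact Submodule.mem_top
      · simp only [if_neg htgt, Submodule.mem_bot]
        by_cases hsrc : e (srcA r s a) = 1
        · simp only [if_pos hsrc] at hx
          by_cases hc : c a = 0
          · rw [show (scalarRep k r s d c).mat a = Matrix.of (fun _ _ => c a) from rfl,
              constMat_mulVec, hc]
            funext i; simp
          · have hds : d (srcA r s a) = 1 := by
              rcases hrange (srcA r s a) with h | h
              · omega
              · exact h.2
            have hdt : d (tgtA r s a) = 0 := by
              have h1 := hclosed a hc hds
              have h2 := hd (tgtA r s a)
              by_cases hh : d (tgtA r s a) = 1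
              · exact absurd (h1 hh hsrc) htgt
              · omega
            exact fin0_eq_zero hdt _
        · simp only [if_neg hsrc, Submodule.mem_bot] at hx
          rw [hx]
          rw [show (scalarRep k r s d c).mat a = Matrix.of (fun _ _ => c a) from rfl,
            constMat_mulVec]
          funext i; simp
    · intro v
      by_cases hv : e v = 1
      · have hdv : d v = 1 := by
          rcases hrange v with h | h
          · omega
          · exact h.2
        dsimp only
        change ((Module.finrank k ↥(if e v = 1 then (⊤ : Submodule k (Fin ((scalarRep k r s d c).dim v) → k)) else ⊥) : ℕ) : ℤ) = e v
        rw [if_pos hv, hv]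
        norm_num [finrank_top, scalarRep_dim, Module.finrank_fin_fun, hdv]
      · have hv0 : e v = 0 := by rcases hrange v with h | h; exacts [h, absurd h.1 hv]
        dsimp only
        change ((Module.finrank k ↥(if e v = 1 then (⊤ : Submodule k (Fin ((scalarRep k r s d c).dim v) → k)) else ⊥) : ℕ) : ℤ) = e v
        rw [if_neg hv, hv0]
        norm_num [finrank_bot]

open scoped Classical in
lemma grCard_eq (r s : ℕ) (d : ℕ → ℕ) (c : ℕ → k) (hd : ∀ v, d v ≤ 1) (e : ℕ → ℤ) :
    grCard (scalarRep k r s d c) e =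
      if ((∀ v, e v = 0 ∨ (e v = 1 ∧ d v = 1)) ∧
       ∀ a, c a ≠ 0 → d (srcA r s a) = 1 → d (tgtA r s a) = 1 →
         e (srcA r s a) = 1 → e (tgtA r s a) = 1) then 1 else 0 := by
  have hsub := subrep_subsingleton (scalarRep k r s d c) hd e
  rw [grCard]
  split_ifs with h
  · have hne := (nonempty_iff r s d c hd e).mpr h
    exact Nat.card_unique
  · have hemp : IsEmpty {U : SubRep (scalarRep k r s d c) //
        ∀ v, (Module.finrank k (U.sub v) : ℤ) = e v} :=
      not_nonempty_iff.mp (fun hne => h ((nonempty_iff r s d c hd e).mp hne))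
    exact Nat.card_of_isEmpty

lemma if_add_if (A B C : Prop) [Decidable A] [Decidable B] [Decidable C]
    (h1 : A ↔ B ∨ C) (h2 : ¬(B ∧ C)) :
    (if A then (1:ℕ) else 0) = (if B then 1 else 0) + (if C then 1 else 0) := by
  by_cases hB : B <;> by_cases hC : C <;>
    simp [hB, hC, h1, h2] <;> tauto

end Aux

/-- identity (★) of Section 6.1: for the quiver Q of type Ã_{r,s}
over a finite field k, E⁽⁰⁾₁[s] the indecomposable regular module of dimension
vector δ = (1,…,1) in the non-homogeneous tube T₀ (all arrows act by 1 except
the bottom arrow into vertex r+1, which acts by 0), E(λ) a degree-1 regular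
simple in a homogeneous tube (all arrows act by 1 except the arrow 1 → r+s,
which acts by λ ≠ 0), and E⁽⁰⁾₂[s−2] the regular module with quasi-socle
E⁽⁰⁾₂ = S_{r+3} and quasi-length s−2 (supported on the bottom vertices
r+3,…,r+s, indices r+2,…,r+s−1, all arrows there acting by 1): for every
dimension vector e,
|Gr_e(E⁽⁰⁾₁[s])| = |Gr_e(E(λ))| + |Gr_{e − dim S_{r+2}}(E⁽⁰⁾₂[s−2])|. -/
theorem stmt17 (k : Type) [Field k] [Fintype k] (r s : ℕ)
    (hr : 1 ≤ r) (hs : 2 ≤ s) (lam : k) (hlam : lam ≠ 0) (e : ℕ → ℤ) :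
    grCard (scalarRep k r s (fun v => if v < r + s then 1 else 0)
        (fun a => if a = r + 1 then 0 else if a < r + s then 1 else 0)) e
      = grCard (scalarRep k r s (fun v => if v < r + s then 1 else 0)
          (fun a => if a = r then lam else if a < r + s then 1 else 0)) e
        + grCard (scalarRep k r s
            (fun v => if r + 2 ≤ v ∧ v < r + s then 1 else 0)
            (fun a => if a < r + s then 1 else 0))
          (fun v => e v - if v = r + 1 then 1 else 0) := by
  classical
  have hd1 : ∀ v : ℕ, (fun v => if v < r + s then (1:ℕ) else 0) v ≤ 1 := by
    intro v; dsimp only; split <;> omega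
  have hd3 : ∀ v : ℕ, (fun v => if r + 2 ≤ v ∧ v < r + s then (1:ℕ) else 0) v ≤ 1 := by
    intro v; dsimp only; split <;> omega
  simp only [grCard_eq (k := k) r s (fun v => if v < r + s then 1 else 0)
      (fun a => if a = r + 1 then 0 else if a < r + s then 1 else 0) hd1 e,
    grCard_eq (k := k) r s (fun v => if v < r + s then 1 else 0)
      (fun a => if a = r then lam else if a < r + s then 1 else 0) hd1 e,
    grCard_eq (k := k) r s (fun v => if r + 2 ≤ v ∧ v < r + s then 1 else 0)
      (fun a => if a < r + s then 1 else 0) hd3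
      (fun v => e v - if v = r + 1 then 1 else 0)]
  -- helper facts
  have hone : ∀ m : ℕ, ((if m < r + s then (1:ℕ) else 0) = 1 ↔ m < r + s) := by
    intro m; split_ifs with h <;> simp [h]
  have h3one : ∀ m : ℕ, ((if r + 2 ≤ m ∧ m < r + s then (1:ℕ) else 0) = 1 ↔
      (r + 2 ≤ m ∧ m < r + s)) := by
    intro m; split_ifs with h <;> simp [h]
  have hc1 : ∀ a : ℕ, ((if a = r + 1 then (0:k) else if a < r + s then 1 else 0) ≠ 0 ↔
      (a ≠ r + 1 ∧ a < r + s)) := by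
    intro a
    split_ifs with h1 h2
    · simp [h1]
    · simp [h1, h2]
    · simp [h2]
  have hc2 : ∀ a : ℕ, ((if a = r then lam else if a < r + s then (1:k) else 0) ≠ 0 ↔
      a < r + s) := by
    intro a
    split_ifs with h1 h2
    · constructor
      · intro _; omega
      · intro _; exact hlam
    · simp [h2]
    · simp [h2]
  have hc3 : ∀ a : ℕ, ((if a < r + s then (1:k) else 0) ≠ 0 ↔ a < r + s) := by
    intro a; split_ifs with h <;> simp [h]
  have hsrcA : ∀ a, r < a → a < r + s → srcA r s a = a := by
    intro a h1 h2; unfold srcA; split_ifs <;> omega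
  have htgtA : ∀ a, r < a → a < r + s → tgtA r s a = a - 1 := by
    intro a h1 h2; unfold tgtA; split_ifs <;> omega
  have hsrcA2 : ∀ a, a < r → srcA r s a = a := by
    intro a h1; unfold srcA; split_ifs <;> omega
  have htgtA2 : ∀ a, a < r → tgtA r s a = a + 1 := by
    intro a h1; unfold tgtA; split_ifs <;> omega
  have hsrcAr : srcA r s r = 0 := by unfold srcA; split_ifs <;> omega
  have htgtAr : tgtA r s r = r + s - 1 := by unfold tgtA; split_ifs <;> omega
  have hsrc_lt : ∀ a, a < r + s → srcA r s a < r + s := by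
    intro a h; unfold srcA; split_ifs <;> omega
  have htgt_lt : ∀ a, a < r + s → tgtA r s a < r + s := by
    intro a h; unfold tgtA; split_ifs <;> omega
  apply if_add_if
  · constructor
    · rintro ⟨hV, hC1⟩
      have hC1' : ∀ a, a ≠ r + 1 → a < r + s → e (srcA r s a) = 1 → e (tgtA r s a) = 1 := by
        intro a h1 h2 h3
        exact hC1 a ((hc1 a).mpr ⟨h1, h2⟩) ((hone _).mpr (hsrc_lt a h2))
          ((hone _).mpr (htgt_lt a h2)) h3
      by_cases hkey : e (r + 1) = 1 ∧ ¬ e r = 1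
      · right
        obtain ⟨he1, her⟩ := hkey
        have hchain : ∀ m : ℕ, ∀ v, v ≤ r → r - v ≤ m → e v = 1 → e r = 1 := by
          intro m
          induction m with
          | zero =>
            intro v hv1 hv2 hv3
            have hveq : v = r := by omega
            rwa [hveq] at hv3
          | succ m ih =>
            intro v hv1 hv2 hv3
            by_cases hvr : v = r
            · rwa [hvr] at hv3
            · have hvlt : v < r := by omega
              apply ih (v + 1) (by omega) (by omega)
              have h1 := hC1' v (by omega) (by omega)
              rw [hsrcA2 v hvlt, htgtA2 v hvlt] at h1
              exact h1 hv3
        have hnotlow : ∀ v, v ≤ r → ¬ e v = 1 := fun v hv h =>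
          her (hchain r v hv (by omega) h)
        constructor
        · intro v
          by_cases hv : v = r + 1
          · left; rw [hv]; simp [he1]
          · rcases hV v with h | ⟨h1, h2⟩
            · left; simp [hv, h]
            · right
              have hv2 : r + 2 ≤ v := by
                by_contra hcon
                have hcase : v ≤ r ∨ v = r + 1 := by omega
                rcases hcase with h' | h'
                · exact hnotlow v h' h1
                · exact hv h'
              have hvlt : v < r + s := (hone v).mp h2
              exact ⟨by simp [hv, h1], (h3one v).mpr ⟨hv2, hvlt⟩⟩
        · intro a hca hds hdt hes
          have ha : a < r + s := (hc3 a).mp hca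
          have hds' := (h3one _).mp hds
          have hdt' := (h3one _).mp hdt
          have har : r < a := by
            by_contra hcon
            push_neg at hcon
            rcases Nat.lt_or_ge a r with h' | h'
            · rw [hsrcA2 a h'] at hds'; omega
            · have haeq : a = r := by omega
              rw [haeq, hsrcAr] at hds'
              omega
          rw [hsrcA a har ha] at hds' hes
          rw [htgtA a har ha] at hdt' ⊢
          have h1 := hC1' a (by omega) ha
          rw [hsrcA a har ha, htgtA a har ha] at h1
          have hesa : e a = 1 := by
            have hne : ¬ (a = r + 1) := by omega
            simp only [if_neg hne, sub_zero] at hes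
            exact hes
          have h2 := h1 hesa
          have hne2 : ¬ (a - 1 = r + 1) := by omega
          simp only [if_neg hne2, sub_zero]
          exact h2
      · left
        refine ⟨hV, ?_⟩
        intro a hca hds hdt hes
        have ha : a < r + s := (hc2 a).mp hca
        by_cases har : a = r + 1
        · subst har
          rw [hsrcA (r + 1) (by omega) (by omega)] at hes
          rw [htgtA (r + 1) (by omega) (by omega)]
          have hr1 : r + 1 - 1 = r := by omega
          rw [hr1]
          tauto
        · exact hC1' a har ha hes
    · rintro (⟨hV, hC2⟩ | ⟨hV3, hC3⟩)
      · refine ⟨hV, ?_⟩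
        intro a hca hds hdt hes
        obtain ⟨hne, ha⟩ := (hc1 a).mp hca
        exact hC2 a ((hc2 a).mpr ha) hds hdt hes
      · have he1 : e (r + 1) = 1 := by
          rcases hV3 (r + 1) with h | ⟨h1, h2⟩
          · simp at h; omega
          · have := (h3one (r + 1)).mp h2; omega
        have hev : ∀ v, v ≠ r + 1 → e v = 0 ∨ (e v = 1 ∧ r + 2 ≤ v ∧ v < r + s) := by
          intro v hv
          rcases hV3 v with h | ⟨h1, h2⟩
          · left; simpa [hv] using h
          · right; exact ⟨by simpa [hv] using h1, (h3one v).mp h2⟩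
        constructor
        · intro v
          by_cases hv : v = r + 1
          · right; subst hv; exact ⟨he1, (hone _).mpr (by omega)⟩
          · rcases hev v hv with h | ⟨h1, h2⟩
            · left; exact h
            · right; exact ⟨h1, (hone v).mpr (by omega)⟩
        · intro a hca hds hdt hes
          obtain ⟨hne, ha⟩ := (hc1 a).mp hca
          rcases Nat.lt_or_ge a r with h1 | h1
          · rw [hsrcA2 a h1] at hes
            rcases hev a (by omega) with h | ⟨_, h2⟩
            · omega
            · omega
          · rcases Nat.eq_or_lt_of_le h1 with h2 | h2
            · have h0 : srcA r s a = 0 := by unfold srcA; split_ifs <;> omega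
              rw [h0] at hes
              rcases hev 0 (by omega) with h | ⟨_, h3⟩
              · omega
              · omega
            · have hsa := hsrcA a h2 ha
              have hta := htgtA a h2 ha
              rw [hsa] at hes
              rw [hta]
              have ha2 : r + 2 ≤ a := by omega
              by_cases ha3 : a = r + 2
              · rw [ha3]
                have h2' : r + 2 - 1 = r + 1 := by omega
                rw [h2']
                exact he1
              · have harg1 : (if a < r + s then (1:k) else 0) ≠ 0 := (hc3 a).mpr ha
                have harg2 : (if r + 2 ≤ srcA r s a ∧ srcA r s a < r + s then (1:ℕ) else 0) = 1 := by
                  rw [hsa]; exact (h3one a).mpr ⟨ha2, ha⟩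
                have harg3 : (if r + 2 ≤ tgtA r s a ∧ tgtA r s a < r + s then (1:ℕ) else 0) = 1 := by
                  rw [hta]; exact (h3one _).mpr ⟨by omega, by omega⟩
                have harg4 : e (srcA r s a) - (if srcA r s a = r + 1 then 1 else 0) = 1 := by
                  rw [hsa]
                  have : ¬ (a = r + 1) := by omega
                  simp only [if_neg this, sub_zero]
                  exact hes
                have h3 := hC3 a harg1 harg2 harg3 harg4
                rw [hta] at h3
                have hne2 : ¬ (a - 1 = r + 1) := by omega
                simp only [if_neg hne2, sub_zero] at h3
                exact h3
  · rintro ⟨⟨hV2, hC2⟩, hV3, hC3⟩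
    have he1 : e (r + 1) = 1 := by
      rcases hV3 (r + 1) with h | ⟨h1, h2⟩
      · simp at h; omega
      · have := (h3one (r + 1)).mp h2; omega
    have her : e r = 0 := by
      rcases hV3 r with h | ⟨h1, h2⟩
      · have hne : ¬ (r = r + 1) := by omega
        simp only [if_neg hne, sub_zero] at h
        exact h
      · have := (h3one r).mp h2; omega
    have harg4 : e (srcA r s (r + 1)) = 1 := by
      rw [hsrcA (r + 1) (by omega) (by omega)]; exact he1
    have h := hC2 (r + 1) ((hc2 _).mpr (by omega))
      ((hone _).mpr (hsrc_lt _ (by omega))) ((hone _).mpr (htgt_lt _ (by omega))) harg4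
    rw [htgtA (r + 1) (by omega) (by omega)] at h
    have hr1 : r + 1 - 1 = r := by omega
    rw [hr1] at h
    omega
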